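/- Let G = (V, E) be a connected graph with an orientation, k a positive integer, and for each vertex v let X_v be a uniform random variable on Z/kZ, all independent. For each directed edge e = (u,v), set Y_e = X_v − X_u (mod k). Then for every E' ⊆ E, H((Y_e)_{e∈E'}) = r(E')·log k, where r is the rank function of the graphic matroid (size of a maximum forest in E'). In particular, the constant-weight rank function with weight log k is entropic for graphic matroids. -/

import Mathlib

open Classical Finset Real

/-- Probability of an event under a weight function on a finite sample space. -/
noncomputable def Pr {Ω : Type*} [Fintype Ω] (p : Ω → ℝ) (E : Ω → Prop) : ℝ :=
  ∑ ω, if E ω then p ω else 0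

/-- Shannon entropy (base 2) of a finite-valued random variable. -/
noncomputable def entH {Ω S : Type*} [Fintype Ω] [Fintype S] (p : Ω → ℝ) (f : Ω → S) : ℝ :=
  -∑ s : S, Pr p (fun ω => f ω = s) * Real.logb 2 (Pr p (fun ω => f ω = s))

/-- The signed (rational) incidence vector of a directed edge. -/
def sincVec {V : Type*} [DecidableEq V] (uv : V × V) : V → ℚ :=
  fun x => (if x = uv.2 then (1 : ℚ) else 0) - (if x = uv.1 then 1 else 0)

/-- Rank of an edge set in the graphic matroid: size of a maximum forest, forests
being edge sets with linearly independent signed incidence vectors. -/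
noncomputable def graphicRank {V : Type*} [DecidableEq V] {n : ℕ} (ends : Fin n → V × V)
    (E' : Finset (Fin n)) : ℕ :=
  (E'.powerset.filter (fun F => LinearIndependent ℚ (fun e : {x : Fin n // x ∈ F} => sincVec (ends e.1)))).sup
    Finset.card

lemma entH_unif {Ω S : Type*} [Fintype Ω] [Fintype S] (f : Ω → S) (K N : ℕ)
    (hfib : ∀ s : S, (∃ ω, f ω = s) → (univ.filter (fun ω => f ω = s)).card = K)
    (hΩ : Fintype.card Ω = N * K) (hK : K ≠ 0) (hN : N ≠ 0) :
    entH (fun _ => 1 / (Fintype.card Ω : ℝ)) f = Real.logb 2 N := by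
  classical
  set Rg : Finset S := univ.filter (fun s => ∃ ω, f ω = s) with hRg
  have hmap : ∀ x ∈ (univ : Finset Ω), f x ∈ Rg := by
    intro x _; simp only [hRg, Finset.mem_filter, Finset.mem_univ, true_and]; exact ⟨x, rfl⟩
  have hRcard : Rg.card * K = Fintype.card Ω := by
    rw [← Finset.card_univ, Finset.card_eq_sum_card_fiberwise hmap,
      Finset.sum_congr rfl (fun s hs => hfib s (by simpa [hRg] using hs)),
      Finset.sum_const, smul_eq_mul]
  have hRN : Rg.card = N :=
    Nat.eq_of_mul_eq_mul_right (Nat.pos_of_ne_zero hK) (hRcard.trans hΩ)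
  have hPr : ∀ s : S, Pr (fun _ => 1/(Fintype.card Ω : ℝ)) (fun ω => f ω = s)
      = ((univ.filter (fun ω => f ω = s)).card : ℝ) / (Fintype.card Ω : ℝ) := by
    intro s
    unfold Pr
    rw [Finset.sum_ite, Finset.sum_const, Finset.sum_const_zero, add_zero, nsmul_eq_mul,
      mul_one_div]
  have hNR : (N : ℝ) ≠ 0 := Nat.cast_ne_zero.mpr hN
  have hPrR : ∀ s ∈ Rg, Pr (fun _ => 1/(Fintype.card Ω : ℝ)) (fun ω => f ω = s) = 1 / N := by
    intro s hs
    rw [hPr, hfib s (by simpa [hRg] using hs), hΩ]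
    push_cast
    rw [div_eq_div_iff (by positivity) (by positivity)]
    · ring
  unfold entH
  rw [← Finset.sum_subset (Finset.subset_univ Rg) ?h0]
  · rw [Finset.sum_congr rfl (fun s hs => by rw [hPrR s hs]), Finset.sum_const, hRN,
      nsmul_eq_mul, one_div, Real.logb_inv]
    field_simp
  · intro s _ hs
    have : Pr (fun _ => 1/(Fintype.card Ω : ℝ)) (fun ω => f ω = s) = 0 := by
      rw [hPr]
      have : (univ.filter (fun ω => f ω = s)) = ∅ := by
        rw [Finset.filter_eq_empty_iff]
        intro ω _
        intro h
        exact hs (by simp [hRg]; exact ⟨ω, h⟩)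
      simp [this]
    rw [this, zero_mul]

open Module Submodule

lemma rank_add_card_quot {V : Type*} [Fintype V] [DecidableEq V] {n : ℕ}
    (ends : Fin n → V × V) (E' : Finset (Fin n)) :
    graphicRank ends E' +
      Nat.card (Quotient (Relation.EqvGen.setoid
        (fun a b : V => ∃ e ∈ E', ends e = (a, b) ∨ ends e = (b, a))))
      = Fintype.card V := by
  classical
  set R : V → V → Prop := fun a b => ∃ e ∈ E', ends e = (a, b) ∨ ends e = (b, a) with hRdef
  letI sd : Setoid V := Relation.EqvGen.setoid R
  haveI : Fintype (Quotient sd) := @Quotient.fintype V _ sd (fun a b => Classical.dec _)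
  set Q := Quotient sd with hQdef
  set M : Set (V → ℚ) := (fun e => sincVec (ends e)) '' ↑E' with hMdef
  let φ : (V → ℚ) →ₗ[ℚ] (Q → ℚ) :=
    { toFun := fun x q => ∑ v ∈ univ.filter (fun v => (Quotient.mk sd v : Q) = q), x v
      map_add' := fun x y => by funext q; simp [Finset.sum_add_distrib]
      map_smul' := fun c x => by funext q; simp [Finset.mul_sum] }
  have hφ : ∀ (x : V → ℚ) (q : Q),
      φ x q = ∑ v ∈ univ.filter (fun v => (Quotient.mk sd v : Q) = q), x v := fun _ _ => rfl
  have hout : ∀ q : Q, (Quotient.mk sd (Quotient.out q) : Q) = q := fun q => Quotient.out_eq q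
  -- surjectivity of φ
  have hφsurj : Function.Surjective φ := by
    intro g
    refine ⟨fun v => if Quotient.out (Quotient.mk sd v : Q) = v then g (Quotient.mk sd v) else 0, ?_⟩
    funext q
    rw [hφ]
    have hcongr : ∀ v ∈ univ.filter (fun v => (Quotient.mk sd v : Q) = q),
        (if Quotient.out (Quotient.mk sd v : Q) = v then g (Quotient.mk sd v) else 0)
          = if Quotient.out q = v then g q else 0 := by
      intro v hv
      rw [(Finset.mem_filter.mp hv).2]
    rw [Finset.sum_congr rfl hcongr,
      Finset.sum_ite_eq (univ.filter fun v => (Quotient.mk sd v : Q) = q)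
        (Quotient.out q) (fun _ => g q)]
    simp [hout q]
  -- edges connect their endpoints
  have hedge : ∀ e ∈ E', (Quotient.mk sd (ends e).1 : Q) = Quotient.mk sd (ends e).2 :=
    fun e he => Quotient.sound (Relation.EqvGen.rel _ _ ⟨e, he, Or.inl rfl⟩)
  -- span M ≤ ker φ
  have hspan_le : Submodule.span ℚ M ≤ LinearMap.ker φ := by
    rw [Submodule.span_le]
    rintro w ⟨e, he, rfl⟩
    simp only [SetLike.mem_coe, LinearMap.mem_ker]
    funext q
    rw [hφ]
    simp only [sincVec]
    rw [Finset.sum_sub_distrib,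
      Finset.sum_ite_eq' (univ.filter fun v => (Quotient.mk sd v : Q) = q) (ends e).2
        (fun _ => (1 : ℚ)),
      Finset.sum_ite_eq' (univ.filter fun v => (Quotient.mk sd v : Q) = q) (ends e).1
        (fun _ => (1 : ℚ))]
    simp [Finset.mem_filter, hedge e he]
  -- path lemma
  have hpath : ∀ a b : V, Relation.EqvGen R a b →
      (Pi.single b (1:ℚ) - Pi.single a 1) ∈ Submodule.span ℚ M := by
    intro a b h
    induction h with
    | rel a b hab =>
      obtain ⟨e, he, h1 | h1⟩ := hab
      · have hv : sincVec (ends e) = Pi.single b (1:ℚ) - Pi.single a 1 := by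
          funext x; simp [sincVec, h1, Pi.single_apply]
        rw [← hv]
        exact Submodule.subset_span ⟨e, he, rfl⟩
      · have hv : sincVec (ends e) = Pi.single a (1:ℚ) - Pi.single b 1 := by
          funext x; simp [sincVec, h1, Pi.single_apply]
        have hm : Pi.single a (1:ℚ) - Pi.single b 1 ∈ Submodule.span ℚ M := by
          rw [← hv]; exact Submodule.subset_span ⟨e, he, rfl⟩
        simpa using Submodule.neg_mem _ hm
    | refl a => simp
    | symm a b _ ih => simpa using Submodule.neg_mem _ ih
    | trans a b c _ _ ih1 ih2 =>
      simpa [sub_add_sub_cancel] using Submodule.add_mem _ ih2 ih1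
  -- ker φ ≤ span M
  have hker_le : LinearMap.ker φ ≤ Submodule.span ℚ M := by
    intro x hx
    have hx' : ∀ q : Q, ∑ v ∈ univ.filter (fun v => (Quotient.mk sd v : Q) = q), x v = 0 := by
      intro q
      have := congrFun (LinearMap.mem_ker.mp hx) q
      rwa [hφ] at this
    have h1 : (∑ v : V, x v • (Pi.single (Quotient.out (Quotient.mk sd v : Q)) (1:ℚ) : V → ℚ)) = 0 := by
      rw [← Finset.sum_fiberwise univ (fun v => (Quotient.mk sd v : Q))
        (fun v => x v • (Pi.single (Quotient.out (Quotient.mk sd v : Q)) (1:ℚ) : V → ℚ))]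
      refine Finset.sum_eq_zero fun q _ => ?_
      have hcongr : ∀ v ∈ univ.filter (fun v => (Quotient.mk sd v : Q) = q),
          x v • (Pi.single (Quotient.out (Quotient.mk sd v : Q)) (1:ℚ) : V → ℚ)
            = x v • (Pi.single (Quotient.out q) (1:ℚ) : V → ℚ) := by
        intro v hv; rw [(Finset.mem_filter.mp hv).2]
      rw [Finset.sum_congr rfl hcongr, ← Finset.sum_smul, hx' q, zero_smul]
    have h2 : (∑ v : V, x v • (Pi.single v (1:ℚ) : V → ℚ)) = x := by
      funext w
      rw [Finset.sum_apply]
      have hterm : ∀ v : V, (x v • (Pi.single v (1:ℚ) : V → ℚ)) w = if w = v then x v else 0 := by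
        intro v
        rw [Pi.smul_apply, Pi.single_apply, smul_eq_mul]
        by_cases h : w = v <;> simp [h]
      rw [Finset.sum_congr rfl (fun v _ => hterm v), Finset.sum_ite_eq univ w x]
      simp
    have hxrep : x = ∑ v : V, x v • (Pi.single v (1:ℚ)
        - Pi.single (Quotient.out (Quotient.mk sd v : Q)) 1) := by
      conv_lhs => rw [← h2]
      rw [← sub_zero (∑ v : V, x v • (Pi.single v (1:ℚ) : V → ℚ)), ← h1, ← Finset.sum_sub_distrib]
      exact Finset.sum_congr rfl fun v _ => (smul_sub _ _ _).symm
    rw [hxrep]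
    refine Submodule.sum_mem _ fun v _ => Submodule.smul_mem _ _ ?_
    exact hpath _ _ (Quotient.exact (hout (Quotient.mk sd v)))
  have hspan : Submodule.span ℚ M = LinearMap.ker φ := le_antisymm hspan_le hker_le
  -- rank-nullity
  have hQV : finrank ℚ (LinearMap.ker φ) + Fintype.card Q = Fintype.card V := by
    have h := LinearMap.finrank_range_add_finrank_ker φ
    rw [LinearMap.range_eq_top.mpr hφsurj, finrank_top] at h
    simp only [Module.finrank_pi] at h
    omega
  -- graphicRank = finrank span M
  have hle : graphicRank ends E' ≤ finrank ℚ (Submodule.span ℚ M) := by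
    apply Finset.sup_le
    intro F hF
    rw [Finset.mem_filter, Finset.mem_powerset] at hF
    obtain ⟨hFE, hFind⟩ := hF
    have h1 : finrank ℚ (Submodule.span ℚ
        (Set.range (fun e : {x : Fin n // x ∈ F} => sincVec (ends e.1))))
        = Fintype.card {x : Fin n // x ∈ F} := finrank_span_eq_card hFind
    have h2 : Set.range (fun e : {x : Fin n // x ∈ F} => sincVec (ends e.1)) ⊆ M := by
      rintro _ ⟨e, rfl⟩; exact ⟨e.1, hFE e.2, rfl⟩
    rw [← Fintype.card_coe F, ← h1]
    exact Submodule.finrank_mono (Submodule.span_mono h2)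
  have hge : finrank ℚ (Submodule.span ℚ M) ≤ graphicRank ends E' := by
    obtain ⟨b, hbM, hbspan, hbind⟩ := exists_linearIndependent ℚ M
    have hbfin : b.Finite := (E'.finite_toSet.image _).subset hbM
    haveI := hbfin.fintype
    have hbcard : finrank ℚ (Submodule.span ℚ M) = b.toFinset.card := by
      rw [← hbspan]; exact finrank_span_set_eq_card hbind
    have hchoose : ∀ w ∈ b, ∃ e, e ∈ E' ∧ sincVec (ends e) = w := by
      intro w hw
      obtain ⟨e, he, hew⟩ := hbM hw
      exact ⟨e, he, hew⟩
    choose g hg1 hg2 using hchoose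
    let gg : {w // w ∈ b.toFinset} → Fin n := fun w => g w.1 (Set.mem_toFinset.mp w.2)
    set F : Finset (Fin n) := b.toFinset.attach.image gg with hFdef
    have hggv : ∀ w : {w // w ∈ b.toFinset}, sincVec (ends (gg w)) = w.1 :=
      fun w => hg2 w.1 (Set.mem_toFinset.mp w.2)
    have hginj : Function.Injective gg := by
      intro w w' hww'
      apply Subtype.ext
      rw [← hggv w, ← hggv w', hww']
    have hFcard : F.card = b.toFinset.card := by
      rw [hFdef, Finset.card_image_of_injective _ hginj, Finset.card_attach]
    have hFE : F ⊆ E' := by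
      intro e he
      rw [hFdef, Finset.mem_image] at he
      obtain ⟨w, _, rfl⟩ := he
      exact hg1 _ _
    have hmemb : ∀ e : {x : Fin n // x ∈ F}, sincVec (ends e.1) ∈ b := by
      intro e
      obtain ⟨w, hw, hwe⟩ := Finset.mem_image.mp (show (e : Fin n) ∈ b.toFinset.attach.image gg from e.2)
      rw [← hwe, hggv w]
      exact Set.mem_toFinset.mp w.2
    have hind : LinearIndependent ℚ (fun e : {x : Fin n // x ∈ F} => sincVec (ends e.1)) := by
      have hcomp : LinearIndependent ℚ (((↑) : b → (V → ℚ)) ∘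
          (fun e : {x : Fin n // x ∈ F} => (⟨sincVec (ends e.1), hmemb e⟩ : b))) := by
        apply hbind.comp
        intro e e' hee'
        obtain ⟨w, hw, hwe⟩ := Finset.mem_image.mp (show (e : Fin n) ∈ b.toFinset.attach.image gg from e.2)
        obtain ⟨w', hw', hwe'⟩ := Finset.mem_image.mp (show (e' : Fin n) ∈ b.toFinset.attach.image gg from e'.2)
        have hval : sincVec (ends e.1) = sincVec (ends e'.1) := congrArg Subtype.val hee'
        have h1 : sincVec (ends e.1) = w.1 := by rw [← hwe]; exact hggv w
        have h2 : sincVec (ends e'.1) = w'.1 := by rw [← hwe']; exact hggv w'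
        have hww : w = w' := Subtype.ext (by rw [← h1, ← h2, hval])
        apply Subtype.ext
        rw [← hwe, ← hwe', hww]
      exact hcomp
    have hFmem : F ∈ E'.powerset.filter (fun F => LinearIndependent ℚ
        (fun e : {x : Fin n // x ∈ F} => sincVec (ends e.1))) :=
      Finset.mem_filter.mpr ⟨Finset.mem_powerset.mpr hFE, hind⟩
    calc finrank ℚ (Submodule.span ℚ M) = F.card := by rw [hbcard, hFcard]
      _ ≤ graphicRank ends E' := Finset.le_sup hFmem
  have hrk : graphicRank ends E' = finrank ℚ (LinearMap.ker φ) := by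
    rw [← hspan]; exact le_antisymm hle hge
  rw [hrk, Nat.card_eq_fintype_card]
  exact hQV


set_option maxHeartbeats 2000000 in
theorem graphic_constant_weight_entropic {V : Type*} [Fintype V] [DecidableEq V]
    (n : ℕ) (ends : Fin n → V × V)
    (hconn : ∀ u v : V,
      Relation.ReflTransGen (fun a b => ∃ e, ends e = (a, b) ∨ ends e = (b, a)) u v)
    (k : ℕ) [NeZero k] :
    ∀ E' : Finset (Fin n),
      entH (fun _ : V → ZMod k => (1 : ℝ) / (k : ℝ) ^ Fintype.card V)
          (fun ω => fun e : E' => ω (ends e.1).2 - ω (ends e.1).1) =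
        (graphicRank ends E' : ℝ) * Real.logb 2 k := by
  intro E'
  classical
  set R : V → V → Prop := fun a b => ∃ e ∈ E', ends e = (a, b) ∨ ends e = (b, a) with hRdef
  letI sd : Setoid V := Relation.EqvGen.setoid R
  haveI : Fintype (Quotient sd) := @Quotient.fintype V _ sd (fun a b => Classical.dec _)
  set Q := Quotient sd with hQdef
  set c := Fintype.card Q with hc
  set r := graphicRank ends E' with hr
  set f : (V → ZMod k) → ({x : Fin n // x ∈ E'} → ZMod k) :=
    fun ω => fun e => ω (ends e.1).2 - ω (ends e.1).1 with hf
  have hk : k ≠ 0 := NeZero.ne k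
  have hrc : r + c = Fintype.card V := by
    have h := rank_add_card_quot ends E'
    rwa [Nat.card_eq_fintype_card] at h
  have hedge : ∀ e ∈ E', (Quotient.mk sd (ends e).1 : Q) = Quotient.mk sd (ends e).2 :=
    fun e he => Quotient.sound (Relation.EqvGen.rel _ _ ⟨e, he, Or.inl rfl⟩)
  -- elements of the kernel are constant on classes
  have hconst : ∀ (ω : V → ZMod k), f ω = 0 → ∀ a b : V, Relation.EqvGen R a b → ω a = ω b := by
    intro ω hω a b h
    induction h with
    | rel a b hab =>
      obtain ⟨e, he, h1 | h1⟩ := hab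
      · have h0 := congrFun hω ⟨e, he⟩
        simp only [hf, Pi.zero_apply, h1] at h0
        exact (sub_eq_zero.mp h0).symm
      · have h0 := congrFun hω ⟨e, he⟩
        simp only [hf, Pi.zero_apply, h1] at h0
        exact sub_eq_zero.mp h0
    | refl a => rfl
    | symm a b _ ih => exact ih.symm
    | trans a b cc _ _ ih1 ih2 => exact ih1.trans ih2
  -- cardinality of the kernel
  have hker : (univ.filter (fun ω : V → ZMod k => f ω = 0)).card = k ^ c := by
    have hcongr : Fintype.card {ω : V → ZMod k // f ω = 0} = Fintype.card (Q → ZMod k) := by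
      apply Fintype.card_congr
      refine
        { toFun := fun ω q => ω.1 (Quotient.out q)
          invFun := fun g => ⟨fun v => g (Quotient.mk sd v), ?_⟩
          left_inv := ?_
          right_inv := ?_ }
      · funext e
        simp only [hf, Pi.zero_apply]
        rw [hedge e.1 e.2, sub_self]
      · intro ω
        apply Subtype.ext
        funext v
        exact hconst ω.1 ω.2 _ _ (Quotient.exact (Quotient.out_eq (Quotient.mk sd v)))
      · intro g
        funext q
        simp only
        rw [Quotient.out_eq]
    calc (univ.filter (fun ω : V → ZMod k => f ω = 0)).card
        = Fintype.card {ω : V → ZMod k // f ω = 0} := (Fintype.card_subtype _).symm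
      _ = Fintype.card (Q → ZMod k) := hcongr
      _ = k ^ c := by rw [Fintype.card_fun, ZMod.card]
  -- f is additive
  have hfadd : ∀ ω₁ ω₂ : V → ZMod k, f (ω₁ + ω₂) = f ω₁ + f ω₂ := by
    intro ω₁ ω₂
    funext e
    simp only [hf, Pi.add_apply]
    ring
  have hfsub : ∀ ω₁ ω₂ : V → ZMod k, f (ω₁ - ω₂) = f ω₁ - f ω₂ := by
    intro ω₁ ω₂
    funext e
    simp only [hf, Pi.sub_apply]
    ring
  -- all nonempty fibers have the same cardinality
  have hfib : ∀ s, (∃ ω, f ω = s) → (univ.filter (fun ω => f ω = s)).card = k ^ c := by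
    rintro s ⟨ω₀, hω₀⟩
    rw [← hker]
    apply Finset.card_nbij' (fun ω => ω - ω₀) (fun ω => ω + ω₀)
    · intro ω hω
      rw [Finset.mem_coe, Finset.mem_filter] at hω ⊢
      refine ⟨Finset.mem_univ _, ?_⟩
      rw [hfsub, hω.2, hω₀, sub_self]
    · intro ω hω
      rw [Finset.mem_coe, Finset.mem_filter] at hω ⊢
      refine ⟨Finset.mem_univ _, ?_⟩
      rw [hfadd, hω.2, hω₀, zero_add]
    · intro ω _
      simp
    · intro ω _
      simp
  have hΩcard : Fintype.card (V → ZMod k) = k ^ r * k ^ c := by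
    rw [Fintype.card_fun, ZMod.card, ← pow_add, hrc]
  have hp : (fun _ : V → ZMod k => (1 : ℝ) / (k : ℝ) ^ Fintype.card V)
      = fun _ : V → ZMod k => 1 / (Fintype.card (V → ZMod k) : ℝ) := by
    funext ω
    rw [Fintype.card_fun, ZMod.card]
    push_cast
    ring
  rw [hp, entH_unif f (k ^ c) (k ^ r)
    (fun s hs => by rw [Finset.filter_congr_decidable]; exact hfib s hs)
    hΩcard (pow_ne_zero _ hk) (pow_ne_zero _ hk)]
  push_cast
  rw [Real.logb_pow]
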